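/- Let ℓ ≥ 1 be an integer, a = 2π/(2ℓ+1), and let m be an integer with -ℓ ≤ m ≤ ℓ. Then for all real θ, φ: Σ_{j=-ℓ}^{ℓ} e^{-i m j a}·[cos θ + i·sin θ·sin(φ + j·a)]^ℓ = (2ℓ+1)·e^{i m φ}·Σ_{q=max(0,m)}^{⌊(ℓ+m)/2⌋} (ℓ!·(-1)^{q-m}·2^{m-2q} / ((ℓ+m-2q)!·q!·(q-m)!)) · (cos θ)^{ℓ+m-2q} · (sin θ)^{2q-m}. -/

import Mathlib

open Real

lemma key_a (ℓ : ℕ) : ((2*(ℓ:ℝ)+1)) * (2*π/(2*ℓ+1)) = 2*π := by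
  have hR : (2*(ℓ:ℝ)+1) ≠ 0 := by positivity
  field_simp

lemma keyC (ℓ : ℕ) : ((2*(ℓ:ℤ)+1 : ℤ):ℂ) * ((2*π/(2*ℓ+1) : ℝ) : ℂ) = 2*(π:ℂ) := by
  have := key_a ℓ
  push_cast
  have h2 := congrArg (Complex.ofReal) this
  push_cast at h2
  exact h2

lemma omega_pow (ℓ : ℕ) (n : ℤ) :
    Complex.exp (Complex.I * n * ((2*π/(2*ℓ+1) : ℝ) : ℂ)) ^ (2*ℓ+1) = 1 := by
  rw [← Complex.exp_nat_mul]
  have h : ((2*ℓ+1 : ℕ) : ℂ) * (Complex.I * n * ((2*π/(2*ℓ+1) : ℝ) : ℂ))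
      = (n : ℂ) * (2 * (π:ℂ) * Complex.I) := by
    have := keyC ℓ
    push_cast at this ⊢
    linear_combination (Complex.I * n) * this
  rw [h, Complex.exp_int_mul_two_pi_mul_I]

lemma omega_eq_one_iff (ℓ : ℕ) (n : ℤ) :
    Complex.exp (Complex.I * n * ((2*π/(2*ℓ+1) : ℝ) : ℂ)) = 1 ↔ (2*(ℓ:ℤ)+1) ∣ n := by
  have hc : (2*(π:ℂ)*Complex.I) ≠ 0 := by
    simp [Real.pi_ne_zero, Complex.I_ne_zero]
  have hkey := keyC ℓ
  rw [Complex.exp_eq_one_iff]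
  constructor
  · rintro ⟨k, hk⟩
    refine ⟨k, ?_⟩
    have h1 : (2*(π:ℂ)*Complex.I) * (n : ℂ) = (2*(π:ℂ)*Complex.I) * ((2*(ℓ:ℤ)+1 : ℤ):ℂ) * k := by
      linear_combination ((2*(ℓ:ℤ)+1 : ℤ):ℂ) * hk - (Complex.I*(n:ℂ)) * hkey
    have h2 : (n : ℂ) = ((2*(ℓ:ℤ)+1 : ℤ):ℂ) * k := by
      have := mul_left_cancel₀ hc (by linear_combination h1 :
        (2*(π:ℂ)*Complex.I) * (n:ℂ) = (2*(π:ℂ)*Complex.I) * (((2*(ℓ:ℤ)+1 : ℤ):ℂ) * k))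
      exact this
    exact_mod_cast h2
  · rintro ⟨k, hk⟩
    refine ⟨k, ?_⟩
    have : (n : ℂ) = ((2*(ℓ:ℤ)+1 : ℤ):ℂ) * k := by exact_mod_cast hk
    rw [this]
    linear_combination (Complex.I * (k:ℂ)) * hkey

lemma sum_omega (ℓ : ℕ) (n : ℤ) :
    ∑ j ∈ Finset.Icc (-(ℓ:ℤ)) ℓ, Complex.exp (Complex.I * n * ((2*π/(2*ℓ+1) : ℝ) : ℂ)) ^ j
      = if (2*(ℓ:ℤ)+1) ∣ n then ((2*(ℓ:ℤ)+1 : ℤ):ℂ) else 0 := by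
  have hpow := omega_pow ℓ n
  have hiff := omega_eq_one_iff ℓ n
  set ω := Complex.exp (Complex.I * n * ((2*π/(2*ℓ+1) : ℝ) : ℂ)) with hω
  have hω0 : ω ≠ 0 := Complex.exp_ne_zero _
  have hre : ∑ j ∈ Finset.Icc (-(ℓ:ℤ)) ℓ, ω ^ j
      = ∑ i ∈ Finset.range (2*ℓ+1), ω ^ ((i:ℤ) - ℓ) := by
    refine Finset.sum_nbij' (fun j => (j + ℓ).toNat) (fun i => (i:ℤ) - ℓ) ?_ ?_ ?_ ?_ ?_
    · intro j hj; simp only [Finset.mem_Icc] at hj; simp only [Finset.mem_range]; omega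
    · intro i hi; simp only [Finset.mem_range] at hi; simp only [Finset.mem_Icc]; omega
    · intro j hj; simp only [Finset.mem_Icc] at hj; omega
    · intro i hi; simp only [Finset.mem_range] at hi; omega
    · intro j hj; simp only [Finset.mem_Icc] at hj
      congr 1; omega
  rw [hre]
  have hsplit : ∀ i : ℕ, ω ^ ((i:ℤ) - ℓ) = ω ^ i * ω ^ (-(ℓ:ℤ)) := by
    intro i
    rw [zpow_sub₀ hω0, zpow_natCast, div_eq_mul_inv, zpow_neg, zpow_natCast]
  simp_rw [hsplit, ← Finset.sum_mul]
  by_cases hdvd : (2*(ℓ:ℤ)+1) ∣ n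
  · have h1 : ω = 1 := hiff.mpr hdvd
    rw [if_pos hdvd]
    simp only [h1, one_pow, one_zpow, mul_one, Finset.sum_const, Finset.card_range, nsmul_eq_mul]
    push_cast; ring
  · have h1 : ω ≠ 1 := fun h => hdvd (hiff.mp h)
    rw [geom_sum_eq h1, hpow]
    simp [hdvd]

lemma dvd_small (N t : ℤ) (hN : 0 < N) (h1 : -N < t) (h2 : t < N) (hd : N ∣ t) : t = 0 := by
  rcases hd with ⟨c, rfl⟩
  rcases lt_trichotomy c 0 with h|h|h
  · nlinarith
  · simp [h]
  · nlinarith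

lemma fac_identity (ℓ k q : ℕ) (hqk : q ≤ k) (hkℓ : k ≤ ℓ) :
    ℓ.choose k * k.choose q * ((ℓ-k).factorial * q.factorial * (k-q).factorial)
      = ℓ.factorial := by
  have h1 := Nat.choose_mul_factorial_mul_factorial hqk
  have h2 := Nat.choose_mul_factorial_mul_factorial hkℓ
  rw [← h2, ← h1]; ring

theorem finite_sum_explicit (ℓ : ℕ) (hℓ : 1 ≤ ℓ) (m : ℤ)
    (hm : m ∈ Finset.Icc (-(ℓ : ℤ)) ℓ) (θ φ : ℝ) :
    (∑ j ∈ Finset.Icc (-(ℓ : ℤ)) ℓ,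
        Complex.exp (-Complex.I * m * j * ((2 * π / (2 * ℓ + 1) : ℝ) : ℂ)) *
          ((Real.cos θ : ℂ) + Complex.I * (Real.sin θ : ℂ) *
            (Real.sin (φ + (j : ℝ) * (2 * π / (2 * ℓ + 1))) : ℂ)) ^ ℓ)
      = (2 * ℓ + 1 : ℂ) * Complex.exp (Complex.I * m * φ) *
          ∑ q ∈ Finset.Icc (max 0 m) (((ℓ : ℤ) + m) / 2),
            ((Nat.factorial ℓ : ℂ) * (-1 : ℂ) ^ (q - m) * (2 : ℂ) ^ (m - 2 * q) /
                ((Nat.factorial ((ℓ : ℤ) + m - 2 * q).toNat : ℂ) *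
                  (Nat.factorial q.toNat : ℂ) * (Nat.factorial (q - m).toNat : ℂ))) *
              (Real.cos θ : ℂ) ^ ((ℓ : ℤ) + m - 2 * q).toNat *
              (Real.sin θ : ℂ) ^ (2 * q - m).toNat := by
  obtain ⟨hm1, hm2⟩ := Finset.mem_Icc.mp hm
  set A : ℂ := ((2 * π / (2 * ℓ + 1) : ℝ) : ℂ) with hA
  set c : ℂ := (Real.cos θ : ℂ) with hc
  set s : ℂ := (Real.sin θ : ℂ) with hs
  set X : ℤ → ℂ := fun j => Complex.exp (Complex.I * ((φ:ℂ) + j * A)) with hXdef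
  have hX0 : ∀ j, X j ≠ 0 := fun j => Complex.exp_ne_zero _
  set d : ℂ := s / 2 with hd
  -- Step 1: per-j expansion
  have step1 : ∀ j ∈ Finset.Icc (-(ℓ:ℤ)) ℓ,
      Complex.exp (-Complex.I * m * j * A) *
          (c + Complex.I * s * ((Real.sin (φ + (j:ℝ) * (2*π/(2*ℓ+1))) : ℝ) : ℂ)) ^ ℓ
      = ∑ k ∈ Finset.range (ℓ+1), ∑ q ∈ Finset.range (k+1),
          Complex.exp (Complex.I * m * φ) *
            (((ℓ.choose k : ℂ) * (k.choose q : ℂ) * c^(ℓ-k) * d^q * (-d)^(k-q)) *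
              X j ^ (2*(q:ℤ) - k - m)) := by
    intro j _
    have harg : (((φ + (j:ℝ) * (2*π/(2*ℓ+1))) : ℝ) : ℂ) = (φ:ℂ) + j * A := by
      rw [hA]; push_cast; ring
    have hbr : c + Complex.I * s * ((Real.sin (φ + (j:ℝ) * (2*π/(2*ℓ+1))) : ℝ) : ℂ)
        = d * X j + -(d * (X j)⁻¹) + c := by
      rw [Complex.ofReal_sin, harg, Complex.sin]
      have e1 : Complex.exp (-((φ:ℂ) + j * A) * Complex.I) = (X j)⁻¹ := by
        rw [← Complex.exp_neg]; congr 1; ring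
      have e2 : Complex.exp (((φ:ℂ) + j * A) * Complex.I) = X j := by
        congr 1; ring
      rw [e1, e2, hd]
      linear_combination (s * ((X j)⁻¹ - X j)/2) * Complex.I_sq
    rw [hbr, add_pow]
    rw [Finset.mul_sum]
    refine Finset.sum_congr rfl (fun k hk => ?_)
    rw [add_pow, Finset.sum_mul, Finset.sum_mul, Finset.mul_sum]
    refine Finset.sum_congr rfl (fun q hq => ?_)
    simp only [Finset.mem_range] at hk hq
    have hqk : q ≤ k := Nat.lt_succ_iff.mp hq
    have e3 : Complex.exp (-Complex.I * m * j * A)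
        = Complex.exp (Complex.I * m * φ) * X j ^ (-m) := by
      rw [hXdef]
      show _ = Complex.exp (Complex.I * m * φ) * Complex.exp (Complex.I * ((φ:ℂ) + j * A)) ^ (-m)
      rw [← Complex.exp_int_mul, ← Complex.exp_add]
      congr 1
      push_cast; ring
    have e4 : X j ^ (2*(q:ℤ) - k - m)
        = X j ^ (q:ℕ) * ((X j)⁻¹) ^ (k - q : ℕ) * X j ^ (-m) := by
      rw [inv_pow, ← zpow_natCast (X j) q, ← zpow_natCast (X j) (k-q), ← zpow_neg,
        ← zpow_add₀ (hX0 j), ← zpow_add₀ (hX0 j)]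
      congr 1
      omega
    rw [e3, e4, mul_pow, show (-(d * (X j)⁻¹)) = (-d) * (X j)⁻¹ from by ring, mul_pow]
    ring
  rw [Finset.sum_congr rfl step1]
  -- Step 2: sum over j of zpowers
  have hXsum : ∀ t : ℤ, -(2*(ℓ:ℤ)+1) < t → t < 2*(ℓ:ℤ)+1 →
      ∑ j ∈ Finset.Icc (-(ℓ:ℤ)) ℓ, X j ^ t = if t = 0 then ((2*(ℓ:ℤ)+1 : ℤ):ℂ) else 0 := by
    intro t h1 h2
    have hx : ∀ j : ℤ, j ∈ Finset.Icc (-(ℓ:ℤ)) ℓ → X j ^ t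
        = Complex.exp (Complex.I * t * φ) * Complex.exp (Complex.I * t * A) ^ j := by
      intro j _
      show Complex.exp (Complex.I * ((φ:ℂ) + j * A)) ^ t = _
      rw [← Complex.exp_int_mul, ← Complex.exp_int_mul, ← Complex.exp_add]
      congr 1; ring
    rw [Finset.sum_congr rfl hx, ← Finset.mul_sum, hA, sum_omega ℓ t]
    by_cases ht : t = 0
    · subst ht; simp
    · have hnd : ¬ (2*(ℓ:ℤ)+1) ∣ t := fun hd => ht (dvd_small _ _ (by omega) h1 h2 hd)
      simp [hnd, ht]
  -- Step 3: swap sums and collapse j-sum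
  have step3 : ∀ p : (_ : ℕ) × ℕ, p ∈ (Finset.range (ℓ+1)).sigma (fun k => Finset.range (k+1)) →
      (∑ j ∈ Finset.Icc (-(ℓ:ℤ)) ℓ, Complex.exp (Complex.I * m * φ) *
        (((ℓ.choose p.1 : ℂ) * (p.1.choose p.2 : ℂ) * c^(ℓ-p.1) * d^p.2 * (-d)^(p.1-p.2)) *
          X j ^ (2*(p.2:ℤ) - p.1 - m)))
      = if 2*(p.2:ℤ) - p.1 - m = 0 then
          Complex.exp (Complex.I * m * φ) *
            ((ℓ.choose p.1 : ℂ) * (p.1.choose p.2 : ℂ) * c^(ℓ-p.1) * d^p.2 * (-d)^(p.1-p.2)) *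
            ((2*(ℓ:ℤ)+1 : ℤ):ℂ)
        else 0 := by
    rintro ⟨k, q⟩ hp
    simp only [Finset.mem_sigma, Finset.mem_range] at hp
    have hsum := hXsum (2*(q:ℤ) - k - m) (by omega) (by omega)
    have : ∀ j : ℤ, j ∈ Finset.Icc (-(ℓ:ℤ)) ℓ →
        Complex.exp (Complex.I * m * φ) *
          (((ℓ.choose k : ℂ) * (k.choose q : ℂ) * c^(ℓ-k) * d^q * (-d)^(k-q)) *
            X j ^ (2*(q:ℤ) - k - m))
        = (Complex.exp (Complex.I * m * φ) *
            ((ℓ.choose k : ℂ) * (k.choose q : ℂ) * c^(ℓ-k) * d^q * (-d)^(k-q))) *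
            X j ^ (2*(q:ℤ) - k - m) := by
      intro j _; ring
    rw [Finset.sum_congr rfl this, ← Finset.mul_sum, hsum]
    split_ifs with h0
    · ring
    · exact mul_zero _
  calc (∑ j ∈ Finset.Icc (-(ℓ:ℤ)) ℓ, ∑ k ∈ Finset.range (ℓ+1), ∑ q ∈ Finset.range (k+1),
          Complex.exp (Complex.I * m * φ) *
            (((ℓ.choose k : ℂ) * (k.choose q : ℂ) * c^(ℓ-k) * d^q * (-d)^(k-q)) *
              X j ^ (2*(q:ℤ) - k - m)))
      = ∑ j ∈ Finset.Icc (-(ℓ:ℤ)) ℓ,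
          ∑ p ∈ (Finset.range (ℓ+1)).sigma (fun k => Finset.range (k+1)),
            Complex.exp (Complex.I * m * φ) *
              (((ℓ.choose p.1 : ℂ) * (p.1.choose p.2 : ℂ) * c^(ℓ-p.1) * d^p.2 * (-d)^(p.1-p.2)) *
                X j ^ (2*(p.2:ℤ) - p.1 - m)) := by
        refine Finset.sum_congr rfl (fun j _ => ?_)
        rw [Finset.sum_sigma']
    _ = ∑ p ∈ (Finset.range (ℓ+1)).sigma (fun k => Finset.range (k+1)),
          ∑ j ∈ Finset.Icc (-(ℓ:ℤ)) ℓ,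
            Complex.exp (Complex.I * m * φ) *
              (((ℓ.choose p.1 : ℂ) * (p.1.choose p.2 : ℂ) * c^(ℓ-p.1) * d^p.2 * (-d)^(p.1-p.2)) *
                X j ^ (2*(p.2:ℤ) - p.1 - m)) := Finset.sum_comm
    _ = ∑ p ∈ (Finset.range (ℓ+1)).sigma (fun k => Finset.range (k+1)),
          (if 2*(p.2:ℤ) - p.1 - m = 0 then
            Complex.exp (Complex.I * m * φ) *
              ((ℓ.choose p.1 : ℂ) * (p.1.choose p.2 : ℂ) * c^(ℓ-p.1) * d^p.2 * (-d)^(p.1-p.2)) *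
              ((2*(ℓ:ℤ)+1 : ℤ):ℂ)
          else 0) := Finset.sum_congr rfl step3
    _ = ∑ p ∈ ((Finset.range (ℓ+1)).sigma (fun k => Finset.range (k+1))).filter
            (fun p => 2*(p.2:ℤ) - p.1 - m = 0),
          Complex.exp (Complex.I * m * φ) *
            ((ℓ.choose p.1 : ℂ) * (p.1.choose p.2 : ℂ) * c^(ℓ-p.1) * d^p.2 * (-d)^(p.1-p.2)) *
            ((2*(ℓ:ℤ)+1 : ℤ):ℂ) := (Finset.sum_filter _ _).symm
    _ = (2 * ℓ + 1 : ℂ) * Complex.exp (Complex.I * m * φ) *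
          ∑ q ∈ Finset.Icc (max 0 m) (((ℓ : ℤ) + m) / 2),
            ((Nat.factorial ℓ : ℂ) * (-1 : ℂ) ^ (q - m) * (2 : ℂ) ^ (m - 2 * q) /
                ((Nat.factorial ((ℓ : ℤ) + m - 2 * q).toNat : ℂ) *
                  (Nat.factorial q.toNat : ℂ) * (Nat.factorial (q - m).toNat : ℂ))) *
              c ^ ((ℓ : ℤ) + m - 2 * q).toNat *
              s ^ (2 * q - m).toNat := by
        rw [Finset.mul_sum]
        refine Finset.sum_nbij' (fun p => (p.2 : ℤ)) (fun q => ⟨(2*q - m).toNat, q.toNat⟩)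
          ?_ ?_ ?_ ?_ ?_
        · rintro ⟨k, q⟩ hp
          simp only [Finset.mem_filter, Finset.mem_sigma, Finset.mem_range] at hp
          simp only [Finset.mem_Icc]
          obtain ⟨⟨hk, hq⟩, heq⟩ := hp
          omega
        · rintro q hq
          simp only [Finset.mem_Icc] at hq
          simp only [Finset.mem_filter, Finset.mem_sigma, Finset.mem_range]
          omega
        · rintro ⟨k, q⟩ hp
          simp only [Finset.mem_filter, Finset.mem_sigma, Finset.mem_range] at hp
          dsimp only
          obtain ⟨⟨hk, hq⟩, heq⟩ := hp
          have h1 : (2*(q:ℤ)-m).toNat = k := by omega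
          have h2 : ((q:ℤ)).toNat = q := by omega
          simp [h1, h2]
        · rintro q hq
          simp only [Finset.mem_Icc] at hq
          dsimp only
          omega
        · rintro ⟨k, q⟩ hp
          simp only [Finset.mem_filter, Finset.mem_sigma, Finset.mem_range] at hp
          obtain ⟨⟨hk, hq⟩, heq⟩ := hp
          dsimp only
          have hqk : q ≤ k := by omega
          have hkl : k ≤ ℓ := by omega
          have t1 : ((ℓ:ℤ) + m - 2*(q:ℤ)).toNat = ℓ - k := by omega
          have t2 : ((q:ℤ)).toNat = q := by omega
          have t3 : ((q:ℤ) - m).toNat = k - q := by omega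
          have t4 : (2*(q:ℤ) - m).toNat = k := by omega
          have z1 : ((-1:ℂ)) ^ ((q:ℤ) - m) = (-1:ℂ) ^ (k - q : ℕ) := by
            rw [show (q:ℤ) - m = ((k - q : ℕ) : ℤ) from by omega, zpow_natCast]
          have z2 : ((2:ℂ)) ^ (m - 2*(q:ℤ)) = ((2:ℂ) ^ (k:ℕ))⁻¹ := by
            rw [show m - 2*(q:ℤ) = -((k:ℕ):ℤ) from by omega, zpow_neg, zpow_natCast]
          rw [t1, t2, t3, t4, z1, z2]
          have hdpow : d^q * (-d)^(k-q) = (-1:ℂ)^(k-q) * (s^k / 2^k) := by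
            have h1 : (-d)^(k-q) = (-1:ℂ)^(k-q) * d^(k-q) := by rw [neg_pow]
            have h2 : d^q * d^(k-q) = d^k := by rw [← pow_add]; congr 1; omega
            calc d^q * (-d)^(k-q) = (-1:ℂ)^(k-q) * (d^q * d^(k-q)) := by rw [h1]; ring
              _ = (-1:ℂ)^(k-q) * (s^k / 2^k) := by rw [h2, hd, div_pow]
          have hfac : (ℓ.factorial : ℂ)
              = (ℓ.choose k : ℂ) * (k.choose q : ℂ) *
                (((ℓ-k).factorial : ℂ) * (q.factorial : ℂ) * ((k-q).factorial : ℂ)) := by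
            exact_mod_cast congrArg (Nat.cast (R := ℂ)) (fac_identity ℓ k q hqk hkl).symm
          have hne1 : ((ℓ-k).factorial : ℂ) ≠ 0 := Nat.cast_ne_zero.mpr (Nat.factorial_ne_zero _)
          have hne2 : ((q).factorial : ℂ) ≠ 0 := Nat.cast_ne_zero.mpr (Nat.factorial_ne_zero _)
          have hne3 : ((k-q).factorial : ℂ) ≠ 0 := Nat.cast_ne_zero.mpr (Nat.factorial_ne_zero _)
          have hne4 : ((2:ℂ) ^ k) ≠ 0 := pow_ne_zero _ two_ne_zero
          have hsq : s^q * s^(k-q) = s^k := by rw [← pow_add]; congr 1; omega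
          have hhalf : ((1:ℂ)/2)^q * ((-1:ℂ)/2)^(k-q) * 2^k = (-1:ℂ)^(k-q) := by
            rw [show ((-1:ℂ)/2) = (-1) * (1/2) from by ring, mul_pow]
            have e5 : ((1:ℂ)/2)^q * (((-1:ℂ))^(k-q) * ((1:ℂ)/2)^(k-q)) * 2^k
                = (-1:ℂ)^(k-q) * (((1:ℂ)/2)^q * ((1:ℂ)/2)^(k-q) * 2^k) := by ring
            rw [e5, ← pow_add, show q + (k-q) = k from by omega]
            rw [div_pow, one_pow, one_div, inv_mul_cancel₀ hne4, mul_one]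
          have h3 : (s^q * s^(k-q)) * (((1:ℂ)/2)^q * ((-1:ℂ)/2)^(k-q) * 2^k)
              = s^k * (-1:ℂ)^(k-q) := by rw [hsq, hhalf]
          rw [hfac]
          push_cast
          field_simp
          linear_combination ((ℓ.choose k : ℂ) *
            (k.choose q : ℂ) * c^(ℓ-k) * (2*(ℓ:ℂ)+1)) * h3
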